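/- Approximation lemma for large deviation upper bounds (Lemma 4.1, upper bound): Let (E, ρ) be a separable metric space, I a nonempty index set, (Ω, 𝓕, P) a probability space, and for each ν ∈ I and each t > 0 let L_t^ν and L̄_t^ν be Borel-measurable maps from Ω to E. Let λ : (0,∞) → (0,∞) satisfy λ(t) → ∞ as t → ∞, and let J : E → [0,∞] have compact level sets. Assume: (i) for every closed set A ⊆ E, limsup_{t→∞} (1/λ(t)) · sup_{ν∈I} log P(L̄_t^ν ∈ A) ≤ −inf_{x∈A} J(x); and (ii) for every δ > 0, (1/λ(t)) · sup_{ν∈I} log P(ρ(L_t^ν, L̄_t^ν) > δ) → −∞ as t → ∞. Then for every closed set A ⊆ E, limsup_{t→∞} (1/λ(t)) · sup_{ν∈I} log P(L_t^ν ∈ A) ≤ −inf_{x∈A} J(x). -/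

import Mathlib

open MeasureTheory Filter Set
open scoped ENNReal NNReal

private lemma ereal_mul_real_add {r a : ℝ} (hr : 0 < r) (x : EReal) :
    (r : EReal) * ((a : EReal) + x) = ((r * a : ℝ) : EReal) + (r : EReal) * x := by
  induction x using EReal.rec with
  | bot =>
      rw [EReal.add_bot, EReal.coe_mul_bot_of_pos hr, EReal.add_bot]
  | coe y =>
      norm_cast
      ring
  | top =>
      rw [EReal.coe_add_top, EReal.coe_mul_top_of_pos hr, EReal.coe_add_top]

private lemma ereal_mul_max {r : ℝ} (hr : 0 ≤ r) (x y : EReal) :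
    (r : EReal) * max x y = max ((r : EReal) * x) ((r : EReal) * y) := by
  have hmono : Monotone (fun z : EReal => (r : EReal) * z) :=
    fun a b h => mul_le_mul_of_nonneg_left h (by exact_mod_cast hr)
  exact hmono.map_max

/-- If `J` has compact level sets, `A` is closed and `J > c` on `A`, then
`J > c` on some closed thickening of `A`. -/
private lemma exists_thickening_gt {E : Type*} [MetricSpace E] (J : E → ℝ≥0∞)
    (hJ : ∀ r : NNReal, IsCompact {x : E | J x ≤ r}) (A : Set E) (hA : IsClosed A)
    (c : ℝ≥0) (hc : ∀ x ∈ A, ¬ (J x ≤ (c : ℝ≥0∞))) :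
    ∃ δ : ℝ, 0 < δ ∧ ∀ x ∈ Metric.cthickening δ A, ¬ (J x ≤ (c : ℝ≥0∞)) := by
  by_contra hcon
  push_neg at hcon
  choose x hx hJx using fun n : ℕ =>
    hcon (1 / ((n : ℝ) + 1)) (by positivity)
  obtain ⟨a, ha, φ, hφ, hconv⟩ := (hJ c).tendsto_subseq hJx
  -- `a` belongs to `A` since the thickening radii tend to `0`
  have h1 : Tendsto (fun n => EMetric.infEdist ((x ∘ φ) n) A) atTop
      (nhds (EMetric.infEdist a A)) :=
    ((EMetric.continuous_infEdist).tendsto a).comp hconv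
  have h2 : ∀ n, EMetric.infEdist ((x ∘ φ) n) A ≤ ENNReal.ofReal (1 / ((φ n : ℝ) + 1)) :=
    fun n => (Metric.mem_cthickening_iff).1 (hx (φ n))
  have h3 : Tendsto (fun n : ℕ => ENNReal.ofReal (1 / ((φ n : ℝ) + 1))) atTop (nhds 0) := by
    have hreal : Tendsto (fun n : ℕ => 1 / ((n : ℝ) + 1)) atTop (nhds 0) :=
      tendsto_one_div_add_atTop_nhds_zero_nat
    have := (ENNReal.continuous_ofReal.tendsto 0).comp (hreal.comp hφ.tendsto_atTop)
    simpa [Function.comp_def] using this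
  have hzero : EMetric.infEdist a A ≤ 0 :=
    le_of_tendsto_of_tendsto h1 h3 (Filter.Eventually.of_forall h2)
  have haA : a ∈ A := by
    have : a ∈ closure A :=
      EMetric.mem_closure_iff_infEdist_zero.2 (le_antisymm hzero bot_le)
    rwa [hA.closure_eq] at this
  exact hc a haA ha

/-- **Approximation lemma for LDP, upper bound** (Lemma 4.1 of the paper).
If the family `Lbar` satisfies the uniform large deviation upper bound with rate
function `J` (with compact level sets) and speed `lam t → ∞`, and `L` is
superexponentially close to `Lbar` uniformly in the index `ν`, then `L` satisfies
the same uniform large deviation upper bound. -/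
theorem approximation_lemma_upper
    {E : Type*} [MetricSpace E] [TopologicalSpace.SeparableSpace E]
    [MeasurableSpace E] [BorelSpace E]
    {I : Type*} [Nonempty I]
    {Ω : Type*} [MeasurableSpace Ω] (P : Measure Ω) [IsProbabilityMeasure P]
    (L Lbar : I → ℝ → Ω → E)
    (hL : ∀ ν : I, ∀ t > (0 : ℝ), Measurable (L ν t))
    (hLbar : ∀ ν : I, ∀ t > (0 : ℝ), Measurable (Lbar ν t))
    (lam : ℝ → ℝ) (hlam_pos : ∀ t > (0 : ℝ), 0 < lam t)
    (hlam : Tendsto lam atTop atTop)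
    (J : E → ℝ≥0∞) (hJ : ∀ r : NNReal, IsCompact {x : E | J x ≤ r})
    -- (i) uniform upper bound for `Lbar`
    (hupper : ∀ A : Set E, IsClosed A →
      limsup (fun t : ℝ =>
          ((1 / lam t : ℝ) : EReal) *
            ⨆ ν : I, ENNReal.log (P {ω | Lbar ν t ω ∈ A})) atTop
        ≤ -(⨅ x ∈ A, (J x : EReal)))
    -- (ii) superexponential approximation
    (happrox : ∀ δ > (0 : ℝ),
      Tendsto (fun t : ℝ =>
          ((1 / lam t : ℝ) : EReal) *
            ⨆ ν : I, ENNReal.log (P {ω | δ < dist (L ν t ω) (Lbar ν t ω)}))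
        atTop (nhds (⊥ : EReal))) :
    ∀ A : Set E, IsClosed A →
      limsup (fun t : ℝ =>
          ((1 / lam t : ℝ) : EReal) *
            ⨆ ν : I, ENNReal.log (P {ω | L ν t ω ∈ A})) atTop
        ≤ -(⨅ x ∈ A, (J x : EReal)) := by
  intro A hA
  set u : ℝ → EReal := fun t =>
    ((1 / lam t : ℝ) : EReal) * ⨆ ν : I, ENNReal.log (P {ω | L ν t ω ∈ A}) with hu_def
  set m : EReal := ⨅ x ∈ A, (J x : EReal) with hm_def
  have hev_lam : ∀ᶠ t : ℝ in atTop, 0 < lam t := hlam.eventually_gt_atTop 0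
  -- the limsup is always `≤ 0`
  have hle0 : limsup u atTop ≤ (0 : EReal) := by
    apply limsup_le_of_le (by isBoundedDefault)
    filter_upwards [hev_lam] with t ht
    have hrt : (0 : ℝ) ≤ 1 / lam t := by positivity
    have hsup : (⨆ ν : I, ENNReal.log (P {ω | L ν t ω ∈ A})) ≤ (0 : EReal) :=
      iSup_le fun ν => by simp [prob_le_one]
    calc u t ≤ ((1 / lam t : ℝ) : EReal) * 0 :=
          mul_le_mul_of_nonneg_left hsup (by exact_mod_cast hrt)
      _ = 0 := mul_zero _
  -- key step : for any `c : ℝ≥0` with `c < m`, the limsup is `≤ -c`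
  have key : ∀ c : ℝ≥0, ((c : ℝ≥0∞) : EReal) < m →
      limsup u atTop ≤ -(((c : ℝ≥0∞)) : EReal) := by
    intro c hcm
    have hAc : ∀ x ∈ A, ¬ (J x ≤ (c : ℝ≥0∞)) := by
      intro x hx hle
      have h1 : m ≤ (J x : EReal) := iInf₂_le x hx
      have h2 : (J x : EReal) ≤ ((c : ℝ≥0∞) : EReal) :=
        EReal.coe_ennreal_le_coe_ennreal_iff.2 hle
      exact absurd hcm (not_lt.2 (h1.trans h2))
    obtain ⟨δ, hδ, hδ2⟩ := exists_thickening_gt J hJ A hA c hAc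
    have hinfc : ((c : ℝ≥0∞) : EReal) ≤ ⨅ x ∈ Metric.cthickening δ A, (J x : EReal) :=
      le_iInf₂ fun x hx =>
        EReal.coe_ennreal_le_coe_ennreal_iff.2 (le_of_lt (not_le.1 (hδ2 x hx)))
    set l2 : ℝ := Real.log 2 with hl2_def
    have hl2 : ENNReal.log 2 = ((l2 : ℝ) : EReal) := by
      rw [ENNReal.log_pos_real' (by norm_num)]
      norm_num [hl2_def]
    set g : ℝ → EReal := fun t => ((1 / lam t * l2 : ℝ) : EReal) with hg_def
    set V : ℝ → EReal := fun t =>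
      ((1 / lam t : ℝ) : EReal) *
        ⨆ ν : I, ENNReal.log (P {ω | Lbar ν t ω ∈ Metric.cthickening δ A}) with hV_def
    set W : ℝ → EReal := fun t =>
      ((1 / lam t : ℝ) : EReal) *
        ⨆ ν : I, ENNReal.log (P {ω | δ < dist (L ν t ω) (Lbar ν t ω)}) with hW_def
    set h : ℝ → EReal := fun t => max (V t) (W t) with hh_def
    -- pointwise bound
    have hmain : ∀ᶠ t : ℝ in atTop, u t ≤ (g + h) t := by
      filter_upwards [hev_lam] with t ht
      have hrt : (0 : ℝ) < 1 / lam t := by positivity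
      have hsup : (⨆ ν : I, ENNReal.log (P {ω | L ν t ω ∈ A})) ≤
          (l2 : EReal) +
            max (⨆ ν : I, ENNReal.log (P {ω | Lbar ν t ω ∈ Metric.cthickening δ A}))
              (⨆ ν : I, ENNReal.log (P {ω | δ < dist (L ν t ω) (Lbar ν t ω)})) := by
        refine iSup_le fun ν => ?_
        have hset : {ω | L ν t ω ∈ A} ⊆
            {ω | Lbar ν t ω ∈ Metric.cthickening δ A} ∪
              {ω | δ < dist (L ν t ω) (Lbar ν t ω)} := by
          intro ω hω
          by_cases hd : δ < dist (L ν t ω) (Lbar ν t ω)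
          · exact Or.inr hd
          · refine Or.inl ?_
            rw [mem_setOf_eq, Metric.mem_cthickening_iff]
            calc EMetric.infEdist (Lbar ν t ω) A ≤ edist (Lbar ν t ω) (L ν t ω) :=
                  EMetric.infEdist_le_edist_of_mem hω
              _ = ENNReal.ofReal (dist (Lbar ν t ω) (L ν t ω)) := edist_dist _ _
              _ ≤ ENNReal.ofReal δ :=
                  ENNReal.ofReal_le_ofReal (by rw [dist_comm]; exact not_lt.1 hd)
        have hP : P {ω | L ν t ω ∈ A} ≤
            2 * max (P {ω | Lbar ν t ω ∈ Metric.cthickening δ A})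
              (P {ω | δ < dist (L ν t ω) (Lbar ν t ω)}) := by
          calc P {ω | L ν t ω ∈ A}
              ≤ P ({ω | Lbar ν t ω ∈ Metric.cthickening δ A} ∪
                  {ω | δ < dist (L ν t ω) (Lbar ν t ω)}) := measure_mono hset
            _ ≤ P {ω | Lbar ν t ω ∈ Metric.cthickening δ A} +
                  P {ω | δ < dist (L ν t ω) (Lbar ν t ω)} := measure_union_le _ _
            _ ≤ max (P {ω | Lbar ν t ω ∈ Metric.cthickening δ A})
                    (P {ω | δ < dist (L ν t ω) (Lbar ν t ω)}) +
                  max (P {ω | Lbar ν t ω ∈ Metric.cthickening δ A})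
                    (P {ω | δ < dist (L ν t ω) (Lbar ν t ω)}) :=
                add_le_add (le_max_left _ _) (le_max_right _ _)
            _ = 2 * _ := (two_mul _).symm
        calc ENNReal.log (P {ω | L ν t ω ∈ A})
            ≤ ENNReal.log (2 * max (P {ω | Lbar ν t ω ∈ Metric.cthickening δ A})
                (P {ω | δ < dist (L ν t ω) (Lbar ν t ω)})) := ENNReal.log_monotone hP
          _ = ENNReal.log 2 + ENNReal.log (max (P {ω | Lbar ν t ω ∈ Metric.cthickening δ A})
                (P {ω | δ < dist (L ν t ω) (Lbar ν t ω)})) := ENNReal.log_mul_add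
          _ = (l2 : EReal) +
                max (ENNReal.log (P {ω | Lbar ν t ω ∈ Metric.cthickening δ A}))
                  (ENNReal.log (P {ω | δ < dist (L ν t ω) (Lbar ν t ω)})) := by
              rw [hl2, ENNReal.log_monotone.map_max]
          _ ≤ (l2 : EReal) +
                max (⨆ ν : I, ENNReal.log (P {ω | Lbar ν t ω ∈ Metric.cthickening δ A}))
                  (⨆ ν : I, ENNReal.log (P {ω | δ < dist (L ν t ω) (Lbar ν t ω)})) :=
              add_le_add_right (max_le_max
                (le_iSup (fun μ : I =>
                  ENNReal.log (P {ω | Lbar μ t ω ∈ Metric.cthickening δ A})) ν)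
                (le_iSup (fun μ : I =>
                  ENNReal.log (P {ω | δ < dist (L μ t ω) (Lbar μ t ω)})) ν)) _
      calc u t ≤ ((1 / lam t : ℝ) : EReal) *
            ((l2 : EReal) +
              max (⨆ ν : I, ENNReal.log (P {ω | Lbar ν t ω ∈ Metric.cthickening δ A}))
                (⨆ ν : I, ENNReal.log (P {ω | δ < dist (L ν t ω) (Lbar ν t ω)}))) :=
            mul_le_mul_of_nonneg_left hsup (by exact_mod_cast hrt.le)
        _ = (g + h) t := by
            rw [ereal_mul_real_add hrt, ereal_mul_max hrt.le]
            rfl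
    have h1 : limsup u atTop ≤ limsup (g + h) atTop := limsup_le_limsup hmain
    have hg : Tendsto g atTop (nhds (0 : EReal)) := by
      have h0 : Tendsto (fun t => 1 / lam t) atTop (nhds (0 : ℝ)) := by
        simpa [one_div, Function.comp_def] using tendsto_inv_atTop_zero.comp hlam
      have : Tendsto (fun t => 1 / lam t * l2) atTop (nhds (0 : ℝ)) := by
        simpa using h0.mul_const l2
      rw [hg_def]
      have h2 := (EReal.tendsto_coe (a := (0 : ℝ))).2 this
      simpa only [EReal.coe_zero] using h2
    have hlimg : limsup g atTop = 0 := hg.limsup_eq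
    have hV : limsup V atTop ≤ -(⨅ x ∈ Metric.cthickening δ A, (J x : EReal)) :=
      hupper _ Metric.isClosed_cthickening
    have hW : limsup W atTop = ⊥ := (happrox δ hδ).limsup_eq
    have h2 : limsup h atTop ≤ -(((c : ℝ≥0∞)) : EReal) := by
      have := limsup_max (f := atTop) (u := V) (v := W)
      rw [hh_def, this]
      refine max_le ?_ ?_
      · exact hV.trans (EReal.neg_le_neg_iff.2 hinfc)
      · rw [hW]; exact bot_le
    have h3 : limsup (g + h) atTop ≤ limsup g atTop + limsup h atTop := by
      refine EReal.limsup_add_le (Or.inl ?_) (Or.inl ?_)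
      · rw [hlimg]; simp
      · rw [hlimg]; simp
    calc limsup u atTop ≤ limsup g atTop + limsup h atTop := h1.trans h3
      _ ≤ 0 + -(((c : ℝ≥0∞)) : EReal) := by
          rw [hlimg]; exact add_le_add_right h2 _
      _ = -(((c : ℝ≥0∞)) : EReal) := zero_add _
  -- conclude
  have hm : m ≤ -(limsup u atTop) := by
    refine le_of_forall_lt fun c' hc' => ?_
    rcases lt_or_ge c' 0 with h0 | h0
    · have hpos : (0 : EReal) ≤ -(limsup u atTop) := by
        rw [← neg_zero]
        exact EReal.neg_le_neg_iff.2 hle0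
      exact lt_of_lt_of_le h0 hpos
    · obtain ⟨r, hr1, hr2⟩ := EReal.lt_iff_exists_real_btwn.1 hc'
      have hrpos : (0 : ℝ) ≤ r := by exact_mod_cast h0.trans hr1.le
      set c : ℝ≥0 := r.toNNReal with hc_def
      have hcr : ((c : ℝ≥0∞) : EReal) = (r : EReal) := by
        rw [EReal.coe_nnreal_eq_coe_real]
        norm_cast
        exact Real.coe_toNNReal r hrpos
      have hkey := key c (by rw [hcr]; exact hr2)
      rw [hcr] at hkey
      exact hr1.trans_le (EReal.le_neg_of_le_neg hkey)
  exact EReal.le_neg_of_le_neg hm
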